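/- (Rate–critical-frequency relation for the Gauss–Markov PSD.) Fix f₀ > 0, let S_Ω(f) := (1/f₀)/((π f/f₀)² + 1), fix f* > 0 and set θ := S_Ω(f*) (so that {f : S_Ω(f) > θ} = (−f*, f*) and f_DR := μ({S_Ω > θ}) = 2 f*). Then the waterfilling rate satisfies ½ ∫_ℝ log₂⁺(S_Ω(f)/θ) df = ∫_0^{f*} log₂( (1 + (π f*/f₀)²) / (1 + (π f/f₀)²) ) df = (1/ln 2)·( 2 f* − (2 f₀/π)·arctan(π f*/f₀) ) = (1/ln 2)·( f_DR − (2 f₀/π)·arctan(π f_DR/(2 f₀)) ). -/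

import Mathlib

open MeasureTheory

private lemma gm_hasDerivAt (a : ℝ) (ha : a ≠ 0) (x : ℝ) :
    HasDerivAt (fun f => f * Real.log (1 + (a*f)^2) - 2*f + (2/a) * Real.arctan (a*f))
      (Real.log (1 + (a*x)^2)) x := by
  have hpos : (0:ℝ) < 1 + (a*x)^2 := by positivity
  have hlin : HasDerivAt (fun f : ℝ => a*f) a x := by
    simpa using (hasDerivAt_id x).const_mul a
  have h1 : HasDerivAt (fun f : ℝ => 1 + (a*f)^2) (2*(a*x)*a) x := by
    exact ((hasDerivAt_const x (1:ℝ)).add (hlin.pow 2)).congr_deriv (by norm_num)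
  have hlog : HasDerivAt (fun f => Real.log (1 + (a*f)^2)) (2*(a*x)*a / (1 + (a*x)^2)) x :=
    h1.log (ne_of_gt hpos)
  have hmul : HasDerivAt (fun f => f * Real.log (1 + (a*f)^2))
      (Real.log (1 + (a*x)^2) + x * (2*(a*x)*a / (1 + (a*x)^2))) x := by
    exact ((hasDerivAt_id' x).mul hlog).congr_deriv (by simp)
  have harc : HasDerivAt (fun f => (2/a) * Real.arctan (a*f))
      ((2/a) * (1 / (1 + (a*x)^2) * a)) x :=
    ((Real.hasDerivAt_arctan (a*x)).comp x hlin).const_mul (2/a)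
  have : HasDerivAt (fun f => f * Real.log (1 + (a*f)^2) - 2*f + (2/a) * Real.arctan (a*f))
      (Real.log (1 + (a * x) ^ 2) + x * (2 * (a * x) * a / (1 + (a * x) ^ 2)) - 2 * 1 +
        2 / a * (1 / (1 + (a * x) ^ 2) * a)) x :=
    (hmul.sub ((hasDerivAt_id x).const_mul 2)).add harc
  convert this using 1
  have hne : (1 + (a*x)^2) ≠ 0 := ne_of_gt hpos
  field_simp
  ring

private lemma gm_cont (a : ℝ) : Continuous (fun f : ℝ => Real.log (1 + (a*f)^2)) := by
  apply Real.continuousOn_log.comp_continuous (by continuity)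
  intro x; exact ne_of_gt (by positivity)

private lemma gm_integral (a : ℝ) (ha : a ≠ 0) (F : ℝ) :
    ∫ f in (0:ℝ)..F, Real.log (1 + (a*f)^2)
      = F * Real.log (1 + (a*F)^2) - 2*F + (2/a) * Real.arctan (a*F) := by
  have h := intervalIntegral.integral_eq_sub_of_hasDerivAt
    (f := fun f => f * Real.log (1 + (a*f)^2) - 2*f + (2/a) * Real.arctan (a*f))
    (fun x _ => gm_hasDerivAt a ha x)
    ((gm_cont a).intervalIntegrable 0 F)
  simpa using h

private lemma gm_integral2 (a : ℝ) (ha : 0 < a) (F : ℝ) :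
    ∫ f in (0:ℝ)..F, Real.log ((1 + (a*F)^2) / (1 + (a*f)^2))
      = 2*F - (2/a) * Real.arctan (a*F) := by
  have hEq : ∀ f : ℝ, Real.log ((1 + (a*F)^2) / (1 + (a*f)^2))
      = Real.log (1 + (a*F)^2) - Real.log (1 + (a*f)^2) := by
    intro f
    rw [Real.log_div (by positivity) (by positivity)]
  rw [intervalIntegral.integral_congr (fun f _ => hEq f),
    intervalIntegral.integral_sub (intervalIntegrable_const) ((gm_cont a).intervalIntegrable 0 F),
    intervalIntegral.integral_const, gm_integral a (ne_of_gt ha) F]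
  simp [smul_eq_mul]; ring

private lemma gm_whole (a F : ℝ) (ha : 0 < a) (hF : 0 < F) :
    (∫ f : ℝ, max (Real.logb 2 ((1 + (a*F)^2) / (1 + (a*f)^2))) 0)
      = 2 * ∫ f in (0:ℝ)..F, Real.logb 2 ((1 + (a*F)^2) / (1 + (a*f)^2)) := by
  set g : ℝ → ℝ := fun f => Real.logb 2 ((1 + (a*F)^2) / (1 + (a*f)^2)) with hg
  have hcont : Continuous g := by
    have h1 : Continuous (fun f : ℝ => Real.log ((1 + (a*F)^2) / (1 + (a*f)^2))) := by
      apply Real.continuousOn_log.comp_continuous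
      · apply Continuous.div continuous_const (by continuity)
        intro x; exact ne_of_gt (by positivity)
      · intro x; exact ne_of_gt (by positivity)
    exact h1.div_const (Real.log 2)
  have hind : (fun f => max (g f) 0) = (Set.Icc (-F) F).indicator g := by
    funext f
    by_cases h : f ∈ Set.Icc (-F) F
    · rw [Set.indicator_of_mem h]
      refine max_eq_left ?_
      apply Real.logb_nonneg one_lt_two
      rw [le_div_iff₀ (by positivity)]
      have h2 : (a*f)^2 ≤ (a*F)^2 := by
        have : |a*f| ≤ |a*F| := by
          rw [abs_mul, abs_mul, abs_of_pos ha, abs_of_pos hF]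
          exact mul_le_mul_of_nonneg_left (abs_le.2 ⟨h.1, h.2⟩) (le_of_lt ha)
        calc (a*f)^2 = |a*f|^2 := (sq_abs _).symm
          _ ≤ |a*F|^2 := by gcongr
          _ = (a*F)^2 := sq_abs _
      linarith
    · rw [Set.indicator_of_notMem h]
      refine max_eq_right ?_
      apply le_of_lt
      refine Real.logb_neg one_lt_two (by positivity) ?_
      · rw [div_lt_one (by positivity)]
        have h2 : (a*F)^2 < (a*f)^2 := by
          have : |a*F| < |a*f| := by
            rw [abs_mul, abs_mul, abs_of_pos ha]
            apply mul_lt_mul_of_pos_left _ ha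
            rw [abs_of_pos hF]
            have h' : f < -F ∨ F < f := by
              simp only [Set.mem_Icc, not_and_or, not_le] at h
              exact h
            rcases h' with h' | h'
            · rw [abs_of_neg (by linarith)]; linarith
            · exact lt_of_lt_of_le h' (le_abs_self f)
          calc (a*F)^2 = |a*F|^2 := (sq_abs _).symm
            _ < |a*f|^2 := by gcongr
            _ = (a*f)^2 := sq_abs _
        linarith
  rw [hind, integral_indicator measurableSet_Icc]
  have : ∫ f in Set.Icc (-F) F, g f = ∫ f in (-F:ℝ)..F, g f := by
    rw [intervalIntegral.integral_of_le (by linarith), ← integral_Icc_eq_integral_Ioc]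
  rw [this, ← intervalIntegral.integral_add_adjacent_intervals
      (hcont.intervalIntegrable (-F) 0) (hcont.intervalIntegrable 0 F)]
  have heven : ∫ f in (-F:ℝ)..0, g f = ∫ f in (0:ℝ)..F, g f := by
    have : ∫ f in (0:ℝ)..F, g (-f) = ∫ f in (-F:ℝ)..(0:ℝ), g f := by
      simpa using intervalIntegral.integral_comp_neg (a := 0) (b := F) (f := g)
    rw [← this]
    apply intervalIntegral.integral_congr
    intro x _; simp [hg, neg_mul, mul_neg, neg_sq]
  rw [heven]; ring

theorem gauss_markov_psd_rate_critical_frequency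
    (f₀ : ℝ) (hf₀ : 0 < f₀) (S : ℝ → ℝ)
    (hS : ∀ f, S f = (1 / f₀) / ((Real.pi * f / f₀) ^ 2 + 1))
    (fstar : ℝ) (hfstar : 0 < fstar) (θ : ℝ) (hθ : θ = S fstar) :
    ((1 / 2) * (∫ f, max (Real.logb 2 (S f / θ)) 0)
      = ∫ f in (0 : ℝ)..fstar,
          Real.logb 2 ((1 + (Real.pi * fstar / f₀) ^ 2) / (1 + (Real.pi * f / f₀) ^ 2))) ∧
    ((1 / 2) * (∫ f, max (Real.logb 2 (S f / θ)) 0)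
      = (1 / Real.log 2)
        * (2 * fstar - (2 * f₀ / Real.pi) * Real.arctan (Real.pi * fstar / f₀))) ∧
    ((1 / 2) * (∫ f, max (Real.logb 2 (S f / θ)) 0)
      = (1 / Real.log 2)
        * ((2 * fstar)
            - (2 * f₀ / Real.pi) * Real.arctan (Real.pi * (2 * fstar) / (2 * f₀)))) := by
  set a : ℝ := Real.pi / f₀ with haa
  have hπ := Real.pi_pos
  have ha : 0 < a := div_pos hπ hf₀
  have haf : ∀ f : ℝ, Real.pi * f / f₀ = a * f := by
    intro f; rw [haa]; ring
  have hratio : ∀ f : ℝ, S f / θ = (1 + (a*fstar)^2) / (1 + (a*f)^2) := by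
    intro f
    rw [hθ, hS, hS, haf, haf]
    have h1 : (0:ℝ) < 1 + (a*f)^2 := by positivity
    have h2 : (0:ℝ) < 1 + (a*fstar)^2 := by positivity
    rw [div_div_div_eq]
    field_simp
    ring
  have hint : (∫ f : ℝ, max (Real.logb 2 (S f / θ)) 0)
      = 2 * ∫ f in (0:ℝ)..fstar, Real.logb 2 ((1 + (a*fstar)^2) / (1 + (a*f)^2)) := by
    rw [← gm_whole a fstar ha hfstar]
    congr 1
    funext f
    rw [hratio f]
  have hval : ∫ f in (0:ℝ)..fstar, Real.logb 2 ((1 + (a*fstar)^2) / (1 + (a*f)^2))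
      = (1 / Real.log 2) * (2*fstar - (2/a) * Real.arctan (a*fstar)) := by
    have : ∀ f : ℝ, Real.logb 2 ((1 + (a*fstar)^2) / (1 + (a*f)^2))
        = Real.log ((1 + (a*fstar)^2) / (1 + (a*f)^2)) / Real.log 2 := fun f => rfl
    rw [intervalIntegral.integral_congr (fun f _ => this f),
      intervalIntegral.integral_div, gm_integral2 a ha fstar]
    ring
  have h2a : 2 / a = 2 * f₀ / Real.pi := by
    rw [haa]; field_simp
  refine ⟨?_, ?_, ?_⟩
  · rw [hint]
    rw [show (1:ℝ)/2 * (2 * ∫ f in (0:ℝ)..fstar,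
        Real.logb 2 ((1 + (a*fstar)^2) / (1 + (a*f)^2)))
      = ∫ f in (0:ℝ)..fstar, Real.logb 2 ((1 + (a*fstar)^2) / (1 + (a*f)^2)) by ring]
    apply intervalIntegral.integral_congr
    intro f _
    simp only [haf]
  · rw [hint, show (1:ℝ)/2 * (2 * ∫ f in (0:ℝ)..fstar,
        Real.logb 2 ((1 + (a*fstar)^2) / (1 + (a*f)^2)))
      = ∫ f in (0:ℝ)..fstar, Real.logb 2 ((1 + (a*fstar)^2) / (1 + (a*f)^2)) by ring,
      hval, h2a, haf]
  · rw [hint, show (1:ℝ)/2 * (2 * ∫ f in (0:ℝ)..fstar,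
        Real.logb 2 ((1 + (a*fstar)^2) / (1 + (a*f)^2)))
      = ∫ f in (0:ℝ)..fstar, Real.logb 2 ((1 + (a*fstar)^2) / (1 + (a*f)^2)) by ring,
      hval, h2a]
    have : Real.pi * (2 * fstar) / (2 * f₀) = a * fstar := by
      rw [haa]; field_simp
    rw [this]
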